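/- In the de Jonquières setting with n odd, there do not exist c_1, c_2 in L with Q(c_i,c_j) = -δ_{ij} and g(c_1) = c_2. (Key step: any x with g(x) = -x and Q(x,x) = -2 lies in the span of S_2, e_1, ..., e_{n-1}, and x + y is never in 2L for y in the fixed sublattice Z{S_2, 2S_1 - e_1 - ... - e_{n-1}}.) -/

import Mathlib

open Fin.NatCast

/-- In the de Jonquières setting (`n ≥ 5` odd), there do not exist `c₁, c₂ ∈ L`
with `Q(cᵢ,cⱼ) = -δᵢⱼ` and `g(c₁) = c₂`. Key steps: any `x` with `g(x) = -x` and
`Q(x,x) = -2` lies in the span of `S₂, e₁, …, e_{n-1}`, and `x + y ∉ 2L` for any such `x`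
and any `y` in the fixed sublattice `ℤ{S₂, 2S₁ - e₁ - ⋯ - e_{n-1}}`. -/
theorem stmt_14 (n : ℕ) (hn : 5 ≤ n) (hodd : Odd n)
    (Q : (Fin (n+1) → ℤ) → (Fin (n+1) → ℤ) → ℤ)
    (hQ : ∀ x y, Q x y = x 0 * y 1 + x 1 * y 0 -
        ∑ i : Fin (n+1), (if 2 ≤ (i : ℕ) then x i * y i else 0))
    (S₁ S₂ : Fin (n+1) → ℤ)
    (hS₁ : S₁ = fun i : Fin (n+1) => if (i : ℕ) = 0 then 1 else 0)
    (hS₂ : S₂ = fun i : Fin (n+1) => if (i : ℕ) = 1 then 1 else 0)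
    (e : ℕ → (Fin (n+1) → ℤ))
    (he : ∀ k, e k = fun i : Fin (n+1) => if (i : ℕ) = k + 1 then 1 else 0)
    (g : (Fin (n+1) → ℤ) ≃ₗ[ℤ] (Fin (n+1) → ℤ))
    (hgQ : ∀ x y, Q (g x) (g y) = Q x y)
    (hgS₁ : g S₁ = S₁ + (((n-1)/2 : ℕ) : ℤ) • S₂ - ∑ k ∈ Finset.Icc 1 (n-1), e k)
    (hgS₂ : g S₂ = S₂)
    (hge : ∀ k, 1 ≤ k → k ≤ n-1 → g (e k) = S₂ - e k) :
    (¬ ∃ c₁ c₂ : Fin (n+1) → ℤ,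
        Q c₁ c₁ = -1 ∧ Q c₂ c₂ = -1 ∧ Q c₁ c₂ = 0 ∧ g c₁ = c₂) ∧
    (∀ x : Fin (n+1) → ℤ, g x = -x → Q x x = -2 →
      x ∈ Submodule.span ℤ ({S₂} ∪ (e '' (Set.Icc 1 (n-1))) : Set (Fin (n+1) → ℤ))) ∧
    (∀ x y : Fin (n+1) → ℤ, g x = -x → Q x x = -2 →
      y ∈ Submodule.span ℤ
        ({S₂, (2 : ℤ) • S₁ - ∑ k ∈ Finset.Icc 1 (n-1), e k} : Set (Fin (n+1) → ℤ)) →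
      ¬ ∃ z : Fin (n+1) → ℤ, x + y = (2 : ℤ) • z) := by
  obtain ⟨t, ht⟩ := hodd
  have hn4 : 4 ≤ n - 1 := by omega
  -- value of the nat cast index
  have hval : ∀ k : ℕ, k ≤ n - 1 → (((k+1 : ℕ) : Fin (n+1)) : ℕ) = k + 1 := by
    intro k hk
    exact Fin.val_cast_of_lt (by omega)
  -- the sum of the e's, componentwise
  have sumE : ∀ j : Fin (n+1), (∑ k ∈ Finset.Icc 1 (n-1), e k) j
      = if 2 ≤ (j : ℕ) then 1 else 0 := by
    intro j
    have hjlt : (j : ℕ) < n + 1 := j.isLt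
    rw [Finset.sum_apply]
    simp only [he]
    by_cases hj : 2 ≤ (j : ℕ)
    · rw [if_pos hj, Finset.sum_eq_single_of_mem ((j : ℕ) - 1)
        (by simp [Finset.mem_Icc]; omega)]
      · rw [if_pos (by omega)]
      · intro k hk hne
        simp only [Finset.mem_Icc] at hk
        rw [if_neg (by omega)]
    · rw [if_neg hj, Finset.sum_eq_zero]
      intro k hk
      simp only [Finset.mem_Icc] at hk
      rw [if_neg (by omega)]
  -- decomposition of an arbitrary vector in the basis S₁, S₂, e k
  have decomp : ∀ x : Fin (n+1) → ℤ,
      x = x 0 • S₁ + x 1 • S₂ + ∑ k ∈ Finset.Icc 1 (n-1), x ((k+1 : ℕ) : Fin (n+1)) • e k := by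
    intro x
    funext j
    have hjlt : (j : ℕ) < n + 1 := j.isLt
    simp only [Pi.add_apply, Pi.smul_apply, smul_eq_mul, Finset.sum_apply, hS₁, hS₂, he]
    by_cases h0 : (j : ℕ) = 0
    · have hj0 : j = 0 := Fin.ext (by simpa using h0)
      rw [Finset.sum_eq_zero (fun k hk => by
        simp only [Finset.mem_Icc] at hk
        rw [if_neg (by omega), mul_zero])]
      simp [h0, hj0]
    · by_cases h1 : (j : ℕ) = 1
      · have hj1 : j = 1 := Fin.ext (by rw [Fin.val_one', Nat.mod_eq_of_lt (by omega)]; omega)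
        rw [Finset.sum_eq_zero (fun k hk => by
          simp only [Finset.mem_Icc] at hk
          rw [if_neg (by omega), mul_zero])]
        rw [if_neg h0, if_pos h1, hj1]; ring
      · rw [if_neg h0, if_neg h1, Finset.sum_eq_single_of_mem ((j : ℕ) - 1)
          (by simp [Finset.mem_Icc]; omega)]
        · rw [if_pos (by omega), mul_one]
          have : (((j : ℕ) - 1 + 1 : ℕ) : Fin (n+1)) = j := by
            have : ((j : ℕ) - 1 + 1 : ℕ) = (j : ℕ) := by omega
            rw [this, Fin.cast_val_eq_self]
          rw [this]; ring
        · intro k hk hne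
          simp only [Finset.mem_Icc] at hk
          rw [if_neg (by omega), mul_zero]
  -- reindexing sums over indices ≥ 2
  have sumX : ∀ f : Fin (n+1) → ℤ,
      (∑ j : Fin (n+1), if 2 ≤ (j : ℕ) then f j else 0)
        = ∑ k ∈ Finset.Icc 1 (n-1), f ((k+1 : ℕ) : Fin (n+1)) := by
    intro f
    rw [← Finset.sum_filter]
    refine Finset.sum_nbij' (fun j => (j : ℕ) - 1) (fun k => ((k+1 : ℕ) : Fin (n+1)))
      ?_ ?_ ?_ ?_ ?_
    · intro a ha
      simp only [Finset.mem_filter, Finset.mem_univ, true_and] at ha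
      have := a.isLt
      simp only [Finset.mem_Icc]; omega
    · intro k hk
      simp only [Finset.mem_Icc] at hk
      simp only [Finset.mem_filter, Finset.mem_univ, true_and]
      rw [hval k hk.2]; omega
    · intro a ha
      simp only [Finset.mem_filter, Finset.mem_univ, true_and] at ha
      have := a.isLt
      have h : ((a : ℕ) - 1 + 1 : ℕ) = (a : ℕ) := by omega
      rw [h, Fin.cast_val_eq_self]
    · intro k hk
      simp only [Finset.mem_Icc] at hk
      rw [hval k hk.2]; omega
    · intro a ha
      simp only [Finset.mem_filter, Finset.mem_univ, true_and] at ha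
      have := a.isLt
      have h : ((a : ℕ) - 1 + 1 : ℕ) = (a : ℕ) := by omega
      rw [h, Fin.cast_val_eq_self]
  -- the coordinate formula for g
  have hgx : ∀ x : Fin (n+1) → ℤ, ∀ j : Fin (n+1),
      g x j = if (j : ℕ) = 0 then x 0
        else if (j : ℕ) = 1 then (((n-1)/2 : ℕ) : ℤ) * x 0 + x 1
          + ∑ k ∈ Finset.Icc 1 (n-1), x ((k+1 : ℕ) : Fin (n+1))
        else - x 0 - x j := by
    intro x j
    have hjlt : (j : ℕ) < n + 1 := j.isLt
    conv_lhs => rw [decomp x]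
    rw [map_add, map_add, map_smul, map_smul, map_sum]
    simp only [map_smul]
    rw [Finset.sum_congr rfl (fun k hk => by
      simp only [Finset.mem_Icc] at hk
      rw [hge k hk.1 hk.2]), hgS₁, hgS₂]
    simp only [Pi.add_apply, Pi.sub_apply, Pi.smul_apply, smul_eq_mul, Finset.sum_apply,
      sumE, hS₁, hS₂]
    split_ifs with h0 h1 h2 <;>
      first
      | (exfalso; omega)
      | (have hs : ∑ k ∈ Finset.Icc 1 (n-1), x ((k+1 : ℕ) : Fin (n+1)) * ((0:ℤ) - e k j) = 0 :=
           Finset.sum_eq_zero fun k hk => by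
             simp only [Finset.mem_Icc] at hk
             simp only [he]
             rw [if_neg (by omega)]; ring
         rw [hs]; ring)
      | (have hs : ∑ k ∈ Finset.Icc 1 (n-1), x ((k+1 : ℕ) : Fin (n+1)) * ((1:ℤ) - e k j)
             = ∑ k ∈ Finset.Icc 1 (n-1), x ((k+1 : ℕ) : Fin (n+1)) :=
           Finset.sum_congr rfl fun k hk => by
             simp only [Finset.mem_Icc] at hk
             simp only [he]
             rw [if_neg (by omega)]; ring
         rw [hs]; ring)
      | (have hs : ∑ k ∈ Finset.Icc 1 (n-1), x ((k+1 : ℕ) : Fin (n+1)) * ((0:ℤ) - e k j) = -x j := by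
           rw [Finset.sum_eq_single_of_mem ((j : ℕ) - 1) (by simp [Finset.mem_Icc]; omega)
             (fun k hk hne => by
               simp only [Finset.mem_Icc] at hk
               simp only [he]
               rw [if_neg (by omega)]; ring)]
           simp only [he]
           rw [if_pos (by omega)]
           have hc : (((j : ℕ) - 1 + 1 : ℕ) : Fin (n+1)) = j := by
             rw [show ((j : ℕ) - 1 + 1 : ℕ) = (j : ℕ) by omega, Fin.cast_val_eq_self]
           rw [hc]; ring
         rw [hs]; ring)
  have hzero : ((0 : Fin (n+1)) : ℕ) = 0 := rfl
  have hone : ((1 : Fin (n+1)) : ℕ) = 1 := by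
    rw [Fin.val_one', Nat.mod_eq_of_lt (by omega)]
  have anti0 : ∀ x : Fin (n+1) → ℤ, g x = -x → x 0 = 0 := by
    intro x hx
    have h := congrFun hx 0
    rw [hgx x 0, if_pos hzero, Pi.neg_apply] at h
    omega
  have antiS : ∀ x : Fin (n+1) → ℤ, g x = -x →
      (∑ k ∈ Finset.Icc 1 (n-1), x ((k+1 : ℕ) : Fin (n+1))) = -2 * x 1 := by
    intro x hx
    have h0 := anti0 x hx
    have h := congrFun hx 1
    rw [hgx x 1, if_neg (by rw [hone]; omega), if_pos hone, Pi.neg_apply, h0] at h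
    linarith
  have hQxx : ∀ x : Fin (n+1) → ℤ, x 0 = 0 →
      Q x x = - ∑ k ∈ Finset.Icc 1 (n-1),
        x ((k+1 : ℕ) : Fin (n+1)) * x ((k+1 : ℕ) : Fin (n+1)) := by
    intro x h0
    rw [hQ, h0, show (∑ i : Fin (n+1), if 2 ≤ (i : ℕ) then x i * x i else 0)
        = ∑ k ∈ Finset.Icc 1 (n-1), x ((k+1 : ℕ) : Fin (n+1)) * x ((k+1 : ℕ) : Fin (n+1))
      from sumX fun j => x j * x j]
    ring
  -- PART 2
  have part2 : ∀ x : Fin (n+1) → ℤ, g x = -x → Q x x = -2 →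
      x ∈ Submodule.span ℤ ({S₂} ∪ (e '' (Set.Icc 1 (n-1))) : Set (Fin (n+1) → ℤ)) := by
    intro x hx _
    have h0 := anti0 x hx
    rw [decomp x, h0, zero_smul, zero_add]
    refine Submodule.add_mem _
      (Submodule.smul_mem _ _ (Submodule.subset_span (by simp))) ?_
    refine Submodule.sum_mem _ fun k hk => Submodule.smul_mem _ _
      (Submodule.subset_span (Or.inr ⟨k, ?_, rfl⟩))
    simp only [Finset.mem_Icc] at hk
    exact Set.mem_Icc.mpr hk
  -- PART 3
  have part3 : ∀ x y : Fin (n+1) → ℤ, g x = -x → Q x x = -2 →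
      y ∈ Submodule.span ℤ
        ({S₂, (2 : ℤ) • S₁ - ∑ k ∈ Finset.Icc 1 (n-1), e k} : Set (Fin (n+1) → ℤ)) →
      ¬ ∃ z : Fin (n+1) → ℤ, x + y = (2 : ℤ) • z := by
    intro x y hx hQx hy hex
    obtain ⟨z, hz⟩ := hex
    obtain ⟨a, b, hab⟩ := Submodule.mem_span_pair.mp hy
    have h0 := anti0 x hx
    have hsum : ∑ k ∈ Finset.Icc 1 (n-1),
        x ((k+1 : ℕ) : Fin (n+1)) * x ((k+1 : ℕ) : Fin (n+1)) = 2 := by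
      have h := hQxx x h0
      rw [hQx] at h
      linarith
    have hyk : ∀ k ∈ Finset.Icc 1 (n-1), y ((k+1 : ℕ) : Fin (n+1)) = -b := by
      intro k hk
      simp only [Finset.mem_Icc] at hk
      have h := congrFun hab ((k+1 : ℕ) : Fin (n+1))
      simp only [Pi.add_apply, Pi.smul_apply, Pi.sub_apply, smul_eq_mul, hS₁, hS₂, sumE] at h
      rw [hval k hk.2, if_neg (show ¬(k + 1 = 1) by omega),
        if_neg (show ¬(k + 1 = 0) by omega), if_pos (show 2 ≤ k + 1 by omega)] at h
      linarith
    have hxk : ∀ k ∈ Finset.Icc 1 (n-1),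
        x ((k+1 : ℕ) : Fin (n+1)) = 2 * z ((k+1 : ℕ) : Fin (n+1)) + b := by
      intro k hk
      have h := congrFun hz ((k+1 : ℕ) : Fin (n+1))
      simp only [Pi.add_apply, Pi.smul_apply, smul_eq_mul] at h
      have hy' := hyk k hk
      linarith
    rcases Int.even_or_odd b with ⟨c, hc⟩ | ⟨c, hc⟩
    · have h4 : (4 : ℤ) ∣ ∑ k ∈ Finset.Icc 1 (n-1),
          x ((k+1 : ℕ) : Fin (n+1)) * x ((k+1 : ℕ) : Fin (n+1)) := by
        refine Finset.dvd_sum fun k hk => ?_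
        have hx' := hxk k hk
        exact ⟨(z ((k+1 : ℕ) : Fin (n+1)) + c) * (z ((k+1 : ℕ) : Fin (n+1)) + c), by
          rw [hx', hc]; ring⟩
      rw [hsum] at h4
      omega
    · have h1le : ∀ k ∈ Finset.Icc 1 (n-1),
          (1 : ℤ) ≤ x ((k+1 : ℕ) : Fin (n+1)) * x ((k+1 : ℕ) : Fin (n+1)) := by
        intro k hk
        have hx' := hxk k hk
        rcases le_or_gt 0 (z ((k+1 : ℕ) : Fin (n+1)) + c) with hns | hns <;> nlinarith
      have hcard := Finset.card_nsmul_le_sum (Finset.Icc 1 (n-1)) _ 1 h1le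
      rw [hsum, Nat.card_Icc, nsmul_eq_mul, mul_one] at hcard
      have : ((n - 1 + 1 - 1 : ℕ) : ℤ) ≤ 2 := hcard
      omega
  -- g is an involution
  have gg : ∀ x : Fin (n+1) → ℤ, g (g x) = x := by
    intro x
    have hcast : ((n - 1 : ℕ) : ℤ) = 2 * (((n-1)/2 : ℕ) : ℤ) := by
      omega
    funext j
    rw [hgx (g x) j]
    split_ifs with h0 h1
    · rw [hgx x 0, if_pos hzero]
      have hj : j = 0 := Fin.ext (by rw [hzero]; exact h0)
      rw [hj]
    · rw [hgx x 0, if_pos hzero, hgx x 1, if_neg (by rw [hone]; omega), if_pos hone]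
      have hterm : ∀ k ∈ Finset.Icc 1 (n-1), (g x) ((k+1 : ℕ) : Fin (n+1))
          = -x 0 - x ((k+1 : ℕ) : Fin (n+1)) := by
        intro k hk
        simp only [Finset.mem_Icc] at hk
        rw [hgx, if_neg (by rw [hval k hk.2]; omega), if_neg (by rw [hval k hk.2]; omega)]
      rw [Finset.sum_congr rfl hterm, Finset.sum_sub_distrib, Finset.sum_const,
        Nat.card_Icc, nsmul_eq_mul]
      have hj : j = 1 := Fin.ext (by rw [hone]; exact h1)
      rw [hj]
      have : ((n - 1 + 1 - 1 : ℕ) : ℤ) = 2 * (((n-1)/2 : ℕ) : ℤ) := by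
        rw [show (n - 1 + 1 - 1 : ℕ) = n - 1 by omega, hcast]
      rw [this]; ring
    · rw [hgx x 0, if_pos hzero, hgx x j, if_neg h0, if_neg h1]
      ring
  -- symmetry and expansion of Q
  have Qsymm : ∀ u w : Fin (n+1) → ℤ, Q u w = Q w u := by
    intro u w
    rw [hQ, hQ]
    have h : ∀ i ∈ (Finset.univ : Finset (Fin (n+1))),
        (if 2 ≤ (i : ℕ) then u i * w i else 0) = (if 2 ≤ (i : ℕ) then w i * u i else 0) :=
      fun i _ => by split_ifs <;> ring
    rw [Finset.sum_congr rfl h]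
    ring
  have Qexpand : ∀ u w : Fin (n+1) → ℤ,
      Q (u - w) (u - w) = Q u u - Q u w - Q w u + Q w w := by
    intro u w
    simp only [hQ, Pi.sub_apply]
    have h : ∀ i ∈ (Finset.univ : Finset (Fin (n+1))),
        (if 2 ≤ (i : ℕ) then (u i - w i) * (u i - w i) else 0)
          = ((if 2 ≤ (i : ℕ) then u i * u i else 0) - (if 2 ≤ (i : ℕ) then u i * w i else 0))
            - ((if 2 ≤ (i : ℕ) then w i * u i else 0) - (if 2 ≤ (i : ℕ) then w i * w i else 0)) :=
      fun i _ => by split_ifs <;> ring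
    rw [Finset.sum_congr rfl h, Finset.sum_sub_distrib, Finset.sum_sub_distrib,
      Finset.sum_sub_distrib]
    ring
  -- PART 1
  have part1 : ¬ ∃ c₁ c₂ : Fin (n+1) → ℤ,
      Q c₁ c₁ = -1 ∧ Q c₂ c₂ = -1 ∧ Q c₁ c₂ = 0 ∧ g c₁ = c₂ := by
    rintro ⟨c₁, c₂, h11, h22, h12, hgc⟩
    have hgc2 : g c₂ = c₁ := by rw [← hgc, gg]
    have hanti : g (c₁ - c₂) = -(c₁ - c₂) := by
      rw [map_sub, hgc, hgc2, neg_sub]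
    have h21 : Q c₂ c₁ = 0 := by rw [Qsymm]; exact h12
    have hQx : Q (c₁ - c₂) (c₁ - c₂) = -2 := by
      rw [Qexpand, h11, h22, h12, h21]; ring
    have hfix : g (c₁ + c₂) = c₁ + c₂ := by
      rw [map_add, hgc, hgc2]; exact add_comm c₂ c₁
    have hyk : ∀ i : Fin (n+1), 2 ≤ (i : ℕ) →
        (c₁ + c₂) i = -(c₁ + c₂) 0 - (c₁ + c₂) i := by
      intro i hi
      conv_lhs => rw [← hfix]
      rw [hgx, if_neg (by omega), if_neg (by omega)]
    have hv2 : (((2 : ℕ) : Fin (n+1)) : ℕ) = 2 := Fin.val_cast_of_lt (by omega)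
    have hy2 := hyk ((2 : ℕ) : Fin (n+1)) (by rw [hv2])
    have hmem : (c₁ + c₂) ∈ Submodule.span ℤ
        ({S₂, (2 : ℤ) • S₁ - ∑ k ∈ Finset.Icc 1 (n-1), e k} : Set (Fin (n+1) → ℤ)) := by
      refine Submodule.mem_span_pair.mpr
        ⟨(c₁ + c₂) 1, -((c₁ + c₂) ((2 : ℕ) : Fin (n+1))), ?_⟩
      funext j
      have hjlt : (j : ℕ) < n + 1 := j.isLt
      simp only [Pi.add_apply, Pi.smul_apply, Pi.sub_apply, smul_eq_mul, hS₁, hS₂, sumE]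
      by_cases h0 : (j : ℕ) = 0
      · have hj : j = 0 := Fin.ext (by rw [hzero]; exact h0)
        rw [if_neg (by omega), if_pos h0, if_neg (by omega)]
        simp only [hj, Pi.add_apply] at hy2 ⊢
        linarith
      · by_cases h1 : (j : ℕ) = 1
        · have hj : j = 1 := Fin.ext (by rw [hone]; exact h1)
          rw [if_pos h1, if_neg (by omega), if_neg (by omega)]
          simp only [hj, Pi.add_apply]
          ring
        · have hjy := hyk j (by omega)
          rw [if_neg h1, if_neg h0, if_pos (by omega)]
          simp only [Pi.add_apply] at hy2 hjy ⊢
          linarith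
    exact part3 (c₁ - c₂) (c₁ + c₂) hanti hQx hmem
      ⟨c₁, by funext j; simp only [Pi.add_apply, Pi.sub_apply, Pi.smul_apply, smul_eq_mul]; ring⟩
  exact ⟨part1, part2, part3⟩
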